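/- Let M be a nonempty set of paths in ℝ^d such that for every X : [0,T] → ℝ^d in M and every t ∈ [0,T], the left subpath X|_{[0,t]} also belongs to M. Then ℐ(M) is contained in T^{≥1}(ℝ^d) and ℐ(M) is a ≻-ideal: for every x ∈ ℐ(M) and every y ∈ T^{≥1}(ℝ^d), both x≻y ∈ ℐ(M) and y≻x ∈ ℐ(M). -/

import Mathlib

open scoped BigOperators TensorProduct

namespace PathVarieties

/-- Words over an alphabet `α`; the letters `{1,…,d}` of `ℝ^d` correspond to `α = Fin d`. -/
abbrev Word (α : Type*) := List α

/-- The tensor algebra `T(ℝ^d)`, identified with the free real vector space on words. -/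
abbrev TA (α : Type*) := Word α →₀ ℝ

/-- The list of all (riffle) shuffles of two words. -/
def shuffles {α : Type*} : Word α → Word α → List (Word α)
  | [], v => [v]
  | a :: u, [] => [a :: u]
  | a :: u, b :: v =>
      ((shuffles u (b :: v)).map (a :: ·)) ++ ((shuffles (a :: u) v).map (b :: ·))
termination_by u v => u.length + v.length
decreasing_by all_goals (simp only [List.length_cons]; omega)

/-- Shuffle product of two words, as an element of `T(ℝ^d)`. -/
noncomputable def shw {α : Type*} (u v : Word α) : TA α :=
  ((shuffles u v).map fun w => Finsupp.single w (1 : ℝ)).sum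

/-- The shuffle product `⧢` on `T(ℝ^d)`, the bilinear extension of the shuffle of words. -/
noncomputable def sh {α : Type*} (x y : TA α) : TA α :=
  x.sum fun u cu => y.sum fun v cv => (cu * cv) • shw u v

/-- Right halfshuffle `u ≻ v` of words (`v` nonempty): shuffle `u` with `v` minus its
last letter, then append the last letter of `v`.  (This is the unique bilinear operation
with `w ≻ a = wa` and `w ≻ (va) = (w≻v + v≻w)a`.) -/
noncomputable def rshw {α : Type*} (u v : Word α) : TA α :=
  ((shuffles u v.dropLast).map fun w =>
    Finsupp.single (w ++ v.drop (v.length - 1)) (1 : ℝ)).sum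

/-- Right halfshuffle `≻` on `T^{≥1}(ℝ^d)`, extended bilinearly. -/
noncomputable def rsh {α : Type*} (x y : TA α) : TA α :=
  x.sum fun u cu => y.sum fun v cv => (cu * cv) • rshw u v

/-- Left halfshuffle `u ≺ v` of words (`u` nonempty): the first letter of `u` followed by
the shuffle of the rest of `u` with `v`.  (This is the unique bilinear operation with
`a ≺ w = aw` and `(av) ≺ w = a(w≺v + v≺w)`.) -/
noncomputable def lshw {α : Type*} (u v : Word α) : TA α :=
  ((shuffles u.tail v).map fun w => Finsupp.single (u.take 1 ++ w) (1 : ℝ)).sum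

/-- Left halfshuffle `≺` on `T^{≥1}(ℝ^d)`, extended bilinearly. -/
noncomputable def lsh {α : Type*} (x y : TA α) : TA α :=
  x.sum fun u cu => y.sum fun v cv => (cu * cv) • lshw u v

/-- The antipode `𝒜`, with `𝒜(i₁⋯iₙ) = (−1)ⁿ iₙ⋯i₁`. -/
noncomputable def antipode {α : Type*} (x : TA α) : TA α :=
  x.sum fun w c => Finsupp.single w.reverse (((-1 : ℝ) ^ w.length) * c)

/-- Helper for `Λ_B`: value on a reversed word. -/
noncomputable def lamRev {α β : Type*} (B : α → TA β) : Word α → TA β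
  | [] => Finsupp.single [] 1
  | [i] => B i
  | i :: w => rsh (lamRev B w) (B i)

/-- `Λ_B` on a word: `Λ_B e = e`, `Λ_B i = B i`, `Λ_B (w·i) = (Λ_B w) ≻ (Λ_B i)`. -/
noncomputable def lamW {α β : Type*} (B : α → TA β) (w : Word α) : TA β :=
  lamRev B w.reverse

/-- The linear map `Λ_B : T(ℝ^t) → T(ℝ^d)` induced by `B` on letters. -/
noncomputable def Lam {α β : Type*} (B : α → TA β) (x : TA α) : TA β :=
  x.sum fun w c => c • lamW B w

/-- `splitEmb e j n w = Σ_{w = u₁⋯uₙ} e_j(u₁) ⧢ e_{j+1}(u₂) ⧢ ⋯ ⧢ e_{j+n−1}(uₙ)`,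
the sum over all splittings of `w` into `n` consecutive (possibly empty) factors,
each factor relabelled letterwise by `e`. -/
noncomputable def splitEmb {α β : Type*} (e : ℕ → α → β) : ℕ → ℕ → Word α → TA β
  | _, 0, w => if w.isEmpty then Finsupp.single ([] : Word β) (1 : ℝ) else 0
  | j, k + 1, w => ∑ m ∈ Finset.range (w.length + 1),
      sh (Finsupp.single ((w.take m).map (e j)) (1 : ℝ)) (splitEmb e (j + 1) k (w.drop m))

/-- `Σ_{x=uv} f(u)·v`: deconcatenate, evaluate the functional `f` on prefixes. -/
noncomputable def leftAct {α : Type*} (f : Word α → ℝ) (x : TA α) : TA α :=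
  x.sum fun w c => c • ∑ k ∈ Finset.range (w.length + 1),
    f (w.take k) • Finsupp.single (w.drop k) (1 : ℝ)

/-- `Σ_{x=uv} u·f(v)`: deconcatenate, evaluate the functional `f` on suffixes. -/
noncomputable def rightAct {α : Type*} (f : Word α → ℝ) (x : TA α) : TA α :=
  x.sum fun w c => c • ∑ k ∈ Finset.range (w.length + 1),
    f (w.drop k) • Finsupp.single (w.take k) (1 : ℝ)

/-- A raw path: a time horizon `T` together with a map `ℝ → ℝ^α`
(only the restriction to `[0,T]` is relevant). -/
structure RawPath (α : Type*) where
  T : ℝ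
  toFun : ℝ → α → ℝ

/-- A path: positive time horizon, continuous on `[0,T]` and piecewise continuously
differentiable there (witnessed by a partition `0 = τ₀ < τ₁ < ⋯ < τₙ = T`). -/
def IsPath {α : Type*} (X : RawPath α) : Prop :=
  0 < X.T ∧ (∀ i, ContinuousOn (fun t => X.toFun t i) (Set.Icc 0 X.T)) ∧
    ∃ (n : ℕ) (τ : Fin (n + 1) → ℝ), StrictMono τ ∧ τ 0 = 0 ∧ τ (Fin.last n) = X.T ∧
      ∀ (k : Fin n) (i : α), ContDiffOn ℝ 1 (fun t => X.toFun t i)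
        (Set.Icc (τ k.castSucc) (τ k.succ))

/-- Iterated integrals, by recursion on the reversed word:
`sigRev X (i :: w) t = ∫₀ᵗ ⟨σ(X)ₛ, w.reverse⟩ dX⁽ⁱ⁾(s)`. -/
noncomputable def sigRev {α : Type*} (X : ℝ → α → ℝ) : Word α → ℝ → ℝ
  | [], _ => 1
  | i :: w, t => ∫ s in (0 : ℝ)..t, sigRev X w s * deriv (fun u => X u i) s

/-- `⟨σ(X)_t, w⟩`, the iterated-integrals signature of `X` stopped at time `t`. -/
noncomputable def sigUpTo {α : Type*} (X : RawPath α) (t : ℝ) (w : Word α) : ℝ :=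
  sigRev X.toFun w.reverse t

/-- `⟨σ(X), w⟩`, the iterated-integrals signature of the path `X` at a word `w`. -/
noncomputable def sig {α : Type*} (X : RawPath α) (w : Word α) : ℝ :=
  sigUpTo X X.T w

/-- Pairing of a word-indexed functional with an element of `T(ℝ^d)`. -/
noncomputable def pairF {α : Type*} (f : Word α → ℝ) (x : TA α) : ℝ :=
  x.sum fun w c => c * f w

/-- `⟨σ(X), x⟩` for a tensor `x ∈ T(ℝ^d)` (linear in `x`). -/
noncomputable def pair {α : Type*} (X : RawPath α) (x : TA α) : ℝ :=
  Finsupp.linearCombination ℝ (sig X) x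

/-- The path variety `𝒱(W)` of all paths whose signature kills every element of `W`. -/
def V {α : Type*} (W : Set (TA α)) : Set (RawPath α) :=
  {X | IsPath X ∧ ∀ x ∈ W, pair X x = 0}

/-- `ℐ(M)`, the space of tensors killed by the signature of every path in `M`. -/
noncomputable def Idl {α : Type*} (M : Set (RawPath α)) : Submodule ℝ (TA α) :=
  ⨅ X ∈ M, LinearMap.ker (Finsupp.linearCombination ℝ (sig X))

/-- Concatenation `X ⊔ Y` of paths. -/
noncomputable def concat {α : Type*} (X Y : RawPath α) : RawPath α where
  T := X.T + Y.T
  toFun := fun t i =>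
    if t ≤ X.T then X.toFun t i else Y.toFun (t - X.T) i + X.toFun X.T i - Y.toFun 0 i

/-- Time reversal `⟵X`. -/
def timeRev {α : Type*} (X : RawPath α) : RawPath α :=
  ⟨X.T, fun t i => X.toFun (X.T - t) i⟩

/-- `concatIter X n = X^{⊔(n+1)}`. -/
noncomputable def concatIter {α : Type*} (X : RawPath α) : ℕ → RawPath α
  | 0 => X
  | n + 1 => concat (concatIter X n) X

/-- `X^{⊔n}`, the `n`-fold concatenation of `X` with itself (intended for `n ≥ 1`). -/
noncomputable def concatPow {α : Type*} (X : RawPath α) (n : ℕ) : RawPath α :=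
  concatIter X (n - 1)

/-- `concatFold f k = f 0 ⊔ f 1 ⊔ ⋯ ⊔ f k`. -/
noncomputable def concatFold {α : Type*} (f : ℕ → RawPath α) : ℕ → RawPath α
  | 0 => f 0
  | k + 1 => concat (concatFold f k) (f (k + 1))

/-- The deconcatenation coproduct `Δ : T(ℝ^d) → T(ℝ^d) ⊗ T(ℝ^d)`,
`Δw = Σ_{w=uv} u ⊗ v`. -/
noncomputable def deconc {α : Type*} (x : TA α) : TensorProduct ℝ (TA α) (TA α) :=
  x.sum fun w c => c • ∑ k ∈ Finset.range (w.length + 1),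
    (Finsupp.single (w.take k) (1 : ℝ)) ⊗ₜ[ℝ] (Finsupp.single (w.drop k) (1 : ℝ))


open MeasureTheory intervalIntegral Set

lemma shuffles_nil_right {α : Type*} (u : Word α) : shuffles u [] = [u] := by
  cases u <;> simp [shuffles]

lemma shuffles_comm {α : Type*} : ∀ u v : Word α, (shuffles u v).Perm (shuffles v u)
  | [], v => by rw [shuffles_nil_right]; simp [shuffles]
  | a :: u, [] => by rw [shuffles_nil_right]; simp [shuffles]
  | a :: u, b :: v => by
      rw [shuffles, shuffles]
      exact (((shuffles_comm u (b :: v)).map _).append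
        ((shuffles_comm (a :: u) v).map _)).trans (List.perm_append_comm)
termination_by u v => u.length + v.length
decreasing_by all_goals (simp only [List.length_cons]; omega)

lemma shuffles_concat {α : Type*} (a b : α) : ∀ u v : Word α,
    (↑(shuffles (u ++ [a]) (v ++ [b])) : Multiset (Word α)) =
      Multiset.map (· ++ [a]) ↑(shuffles u (v ++ [b])) +
      Multiset.map (· ++ [b]) ↑(shuffles (u ++ [a]) v)
  | [], [] => by
      simp [shuffles]
      exact Multiset.cons_swap [a, b] [b, a] 0
  | [], c :: v => by
      have IH := shuffles_concat a b [] v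
      simp only [List.cons_append, List.nil_append] at IH ⊢
      simp only [shuffles, ← Multiset.map_coe, ← Multiset.coe_add, List.map_cons, List.map_nil,
        Multiset.coe_singleton]
      rw [IH]
      simp only [shuffles, Multiset.map_add, Multiset.map_map, Function.comp_def, List.cons_append,
        List.append_assoc, Multiset.map_singleton, Multiset.coe_singleton, List.nil_append]
      abel
  | c :: u, [] => by
      have IH := shuffles_concat a b u []
      rw [shuffles_nil_right] at IH
      simp only [List.cons_append, List.nil_append] at IH ⊢
      simp only [shuffles, shuffles_nil_right, ← Multiset.map_coe, ← Multiset.coe_add,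
        List.map_cons, List.map_nil, Multiset.coe_singleton]
      rw [IH]
      simp only [shuffles, Multiset.map_add, Multiset.map_map, Function.comp_def, List.cons_append,
        List.append_assoc, Multiset.map_singleton, Multiset.coe_singleton, List.nil_append]
      abel
  | c :: u, d :: v => by
      have IH1 := shuffles_concat a b u (d :: v)
      have IH2 := shuffles_concat a b (c :: u) v
      simp only [List.cons_append, List.nil_append] at IH1 IH2 ⊢
      simp only [shuffles, ← Multiset.map_coe, ← Multiset.coe_add, List.map_cons, List.map_nil,
        Multiset.coe_singleton]
      rw [IH1, IH2]
      simp only [shuffles, Multiset.map_add, Multiset.map_map, Function.comp_def, List.cons_append,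
        List.append_assoc, Multiset.map_singleton, Multiset.coe_singleton, List.nil_append]
      abel
termination_by u v => u.length + v.length
decreasing_by all_goals (simp only [List.length_cons, List.length_append]; omega)


lemma ftc_finset (S : Finset ℝ) :
    ∀ (a b : ℝ), a ≤ b → ∀ (H h : ℝ → ℝ), ContinuousOn H (Set.Icc a b) →
    (∀ s ∈ Set.Ioo a b, s ∉ S → HasDerivAt H (h s) s) →
    IntervalIntegrable h MeasureTheory.volume a b →
    ∫ s in a..b, h s = H b - H a := by
  classical
  induction S using Finset.induction_on with
  | empty =>
      intro a b hab H h hc hd hi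
      exact integral_eq_sub_of_hasDerivAt_of_le hab hc
        (fun s hs => hd s hs (by simp)) hi
  | @insert c S hcS ih =>
      intro a b hab H h hc hd hi
      by_cases hcab : c ∈ Set.Ioo a b
      · have h1 : IntervalIntegrable h MeasureTheory.volume a c :=
          hi.mono_set (Set.uIcc_subset_uIcc (Set.left_mem_uIcc)
            (by rw [Set.uIcc_of_le hab]; exact ⟨hcab.1.le, hcab.2.le⟩))
        have h2 : IntervalIntegrable h MeasureTheory.volume c b :=
          hi.mono_set (Set.uIcc_subset_uIcc
            (by rw [Set.uIcc_of_le hab]; exact ⟨hcab.1.le, hcab.2.le⟩) (Set.right_mem_uIcc))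
        have e1 := ih a c hcab.1.le H h (hc.mono (Set.Icc_subset_Icc le_rfl hcab.2.le))
          (fun s hs hsS => hd s ⟨hs.1, hs.2.trans hcab.2⟩ (by
            simp only [Finset.mem_insert, not_or]
            exact ⟨ne_of_lt hs.2, hsS⟩)) h1
        have e2 := ih c b hcab.2.le H h (hc.mono (Set.Icc_subset_Icc hcab.1.le le_rfl))
          (fun s hs hsS => hd s ⟨hcab.1.trans hs.1, hs.2⟩ (by
            simp only [Finset.mem_insert, not_or]
            exact ⟨(ne_of_gt hs.1), hsS⟩)) h2
        rw [← intervalIntegral.integral_add_adjacent_intervals h1 h2, e1, e2]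
        ring
      · exact ih a b hab H h hc (fun s hs hsS => hd s hs (by
          simp only [Finset.mem_insert, not_or]
          exact ⟨fun hrfl => hcab (hrfl ▸ hs), hsS⟩)) hi

/-- Localization package for the derivative of a piecewise-C¹ function. -/
structure Nice {α : Type*} (T : ℝ) (f : ℝ → α → ℝ) (S : Finset ℝ) : Prop where
  loc : ∀ (i : α), ∀ s ∈ Set.Ioo 0 T, s ∉ S → ∃ U, IsOpen U ∧ s ∈ U ∧ U ⊆ Set.Icc 0 T ∧
        ContinuousOn (deriv fun t => f t i) U
  intg : ∀ (i : α) (g : ℝ → ℝ), ContinuousOn g (Set.Icc 0 T) →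
        IntervalIntegrable (fun s => g s * deriv (fun t => f t i) s) MeasureTheory.volume 0 T

lemma find_piece {n : ℕ} {τ : Fin (n + 1) → ℝ} (hmono : StrictMono τ) (h0 : τ 0 = 0)
    {T : ℝ} (hlast : τ (Fin.last n) = T) {s : ℝ} (hs : s ∈ Set.Ioo 0 T)
    (hns : ∀ j, τ j ≠ s) : ∃ k : Fin n, τ k.castSucc < s ∧ s < τ k.succ := by
  classical
  have hA : (0 : Fin (n + 1)) ∈ Finset.univ.filter (fun j => τ j < s) := by
    simp [h0, hs.1]
  set A := Finset.univ.filter (fun j => τ j < s) with hAdef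
  have hAne : A.Nonempty := ⟨0, hA⟩
  set j := A.max' hAne with hj
  have hjA : j ∈ A := A.max'_mem hAne
  have hjs : τ j < s := by simpa [hAdef] using hjA
  have hjne : j ≠ Fin.last n := by
    intro h
    rw [h, hlast] at hjs
    exact absurd hjs (not_lt.2 hs.2.le)
  have hjlt : (j : ℕ) < n := by
    rcases lt_or_eq_of_le (Nat.lt_succ_iff.1 j.isLt) with h | h
    · exact h
    · exact absurd (Fin.ext h) hjne
  refine ⟨⟨j, hjlt⟩, ?_, ?_⟩
  · simpa [Fin.castSucc] using hjs
  · set k : Fin n := ⟨j, hjlt⟩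
    by_contra hle
    have hlt : τ k.succ < s := lt_of_le_of_ne (not_lt.1 hle) (hns k.succ)
    have : k.succ ∈ A := by simp [hAdef, hlt]
    have := A.le_max' _ this
    rw [← hj] at this
    have : (k.succ : Fin (n+1)) ≤ j := this
    have h2 : (j : ℕ) + 1 ≤ (j : ℕ) := by
      simpa [Fin.le_def, k] using this
    omega

lemma exists_nice {α : Type*} (X : RawPath α) (h : IsPath X) :
    ∃ S : Finset ℝ, Nice X.T X.toFun S := by
  classical
  obtain ⟨hT, hcont, n, τ, hmono, h0, hlast, hC1⟩ := h
  refine ⟨Finset.image τ Finset.univ, ?_, ?_⟩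
  · intro i s hs hsS
    have hns : ∀ j, τ j ≠ s := by
      intro j hj
      exact hsS (Finset.mem_image.2 ⟨j, Finset.mem_univ _, hj⟩)
    obtain ⟨k, hk1, hk2⟩ := find_piece hmono h0 hlast hs hns
    refine ⟨Set.Ioo (τ k.castSucc) (τ k.succ), isOpen_Ioo, ⟨hk1, hk2⟩, ?_, ?_⟩
    · intro x hx
      constructor
      · calc (0:ℝ) = τ 0 := h0.symm
          _ ≤ τ k.castSucc := hmono.monotone (Fin.zero_le _)
          _ ≤ x := hx.1.le
      · calc x ≤ τ k.succ := hx.2.le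
          _ ≤ τ (Fin.last n) := hmono.monotone (Fin.le_last _)
          _ = X.T := hlast
    · -- deriv continuous on the open piece
      have huniq : UniqueDiffOn ℝ (Set.Icc (τ k.castSucc) (τ k.succ)) :=
        uniqueDiffOn_Icc (hmono (Fin.castSucc_lt_succ : k.castSucc < k.succ))
      have hdw : ContinuousOn (derivWithin (fun t => X.toFun t i)
          (Set.Icc (τ k.castSucc) (τ k.succ))) (Set.Icc (τ k.castSucc) (τ k.succ)) :=
        (hC1 k i).continuousOn_derivWithin huniq le_rfl
      refine (hdw.mono Set.Ioo_subset_Icc_self).congr ?_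
      intro x hx
      have hmem : Set.Icc (τ k.castSucc) (τ k.succ) ∈ nhds x :=
        Icc_mem_nhds hx.1 hx.2
      exact (derivWithin_of_mem_nhds hmem).symm
  · intro i g hg
    -- integrability on [0, T], glued from the pieces
    have piece : ∀ k : Fin n, IntervalIntegrable
        (fun s => g s * deriv (fun t => X.toFun t i) s) volume (τ k.castSucc) (τ k.succ) := by
      intro k
      have hkk : τ k.castSucc ≤ τ k.succ := (hmono (Fin.castSucc_lt_succ : k.castSucc < k.succ)).le
      have hsub : Set.Icc (τ k.castSucc) (τ k.succ) ⊆ Set.Icc 0 X.T := by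
        apply Set.Icc_subset_Icc
        · calc (0:ℝ) = τ 0 := h0.symm
            _ ≤ τ k.castSucc := hmono.monotone (Fin.zero_le _)
        · calc τ k.succ ≤ τ (Fin.last n) := hmono.monotone (Fin.le_last _)
            _ = X.T := hlast
      have huniq : UniqueDiffOn ℝ (Set.Icc (τ k.castSucc) (τ k.succ)) :=
        uniqueDiffOn_Icc (hmono (Fin.castSucc_lt_succ : k.castSucc < k.succ))
      have hcontOn : ContinuousOn
          (fun s => g s * derivWithin (fun t => X.toFun t i)
            (Set.Icc (τ k.castSucc) (τ k.succ)) s) (Set.Icc (τ k.castSucc) (τ k.succ)) :=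
        (hg.mono hsub).mul ((hC1 k i).continuousOn_derivWithin huniq le_rfl)
      have hii : IntervalIntegrable _ volume (τ k.castSucc) (τ k.succ) :=
        hcontOn.intervalIntegrable_of_Icc hkk
      rw [intervalIntegrable_iff_integrableOn_Ioc_of_le hkk] at hii ⊢
      have hd : ∀ᵐ x ∂(volume : Measure ℝ), x ≠ τ k.succ := by
        rw [MeasureTheory.ae_iff]
        simp only [not_not, Set.setOf_eq_eq_singleton]
        exact Real.volume_singleton
      refine hii.congr ?_
      filter_upwards [MeasureTheory.ae_restrict_mem measurableSet_Ioc,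
        MeasureTheory.ae_restrict_of_ae hd] with x hx hxd
      rw [derivWithin_of_mem_nhds (Icc_mem_nhds hx.1 (lt_of_le_of_ne hx.2 hxd))]
    -- glue the pieces
    have glue : ∀ m : ℕ, ∀ hm : m ≤ n, IntervalIntegrable
        (fun s => g s * deriv (fun t => X.toFun t i) s) volume 0
        (τ ⟨m, Nat.lt_succ_of_le hm⟩) := by
      intro m
      induction m with
      | zero =>
          intro hm
          have : τ ⟨0, Nat.lt_succ_of_le hm⟩ = 0 := h0
          rw [this]
      | succ m ih =>
          intro hm
          have hm' : m ≤ n := Nat.le_of_succ_le hm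
          refine (ih hm').trans ?_
          have e1 : τ (⟨m, hm⟩ : Fin n).castSucc = τ ⟨m, Nat.lt_succ_of_le hm'⟩ := rfl
          have e2 : τ (⟨m, hm⟩ : Fin n).succ = τ ⟨m + 1, Nat.lt_succ_of_le hm⟩ := rfl
          rw [← e1, ← e2]
          exact piece ⟨m, hm⟩
    have := glue n le_rfl
    have hT' : τ ⟨n, Nat.lt_succ_of_le le_rfl⟩ = X.T := hlast
    rwa [hT'] at this
variable {α : Type*} {T : ℝ} {f : ℝ → α → ℝ} {S : Finset ℝ}

lemma sigRev_contOn (hN : Nice T f S) (hT : 0 ≤ T) :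
    ∀ w : Word α, ContinuousOn (fun t => sigRev f w t) (Set.Icc 0 T) := by
  intro w
  induction w with
  | nil => simpa [sigRev] using continuousOn_const
  | cons i w ih =>
      have hint := hN.intg i _ ih
      have : IntegrableOn (fun s => sigRev f w s * deriv (fun t => f t i) s)
          (Set.uIcc 0 T) volume := by
        rw [Set.uIcc_of_le hT, integrableOn_Icc_iff_integrableOn_Ioc]
        exact (intervalIntegrable_iff_integrableOn_Ioc_of_le hT).1 hint
      have hco := intervalIntegral.continuousOn_primitive_interval this
      rw [Set.uIcc_of_le hT] at hco
      simpa [sigRev] using hco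

lemma sigRev_hasDeriv (hN : Nice T f S) (hT : 0 ≤ T) (w : Word α) (i : α)
    {s : ℝ} (hs : s ∈ Set.Ioo 0 T) (hsS : s ∉ S) :
    HasDerivAt (fun t => sigRev f (i :: w) t)
      (sigRev f w s * deriv (fun u => f u i) s) s := by
  obtain ⟨U, hUo, hsU, hUsub, hUc⟩ := hN.loc i s hs hsS
  have hgc := sigRev_contOn hN hT w
  have hint : IntervalIntegrable (fun x => sigRev f w x * deriv (fun u => f u i) x)
      volume 0 s :=
    (hN.intg i _ hgc).mono_set
      (Set.uIcc_subset_uIcc Set.left_mem_uIcc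
        (by rw [Set.uIcc_of_le hT]; exact ⟨hs.1.le, hs.2.le⟩))
  have hcU : ContinuousOn (fun x => sigRev f w x * deriv (fun u => f u i) x) U :=
    (hgc.mono hUsub).mul hUc
  have hmeas : StronglyMeasurableAtFilter
      (fun x => sigRev f w x * deriv (fun u => f u i) x) (nhds s) volume :=
    ⟨U, hUo.mem_nhds hsU, hcU.aestronglyMeasurable hUo.measurableSet⟩
  have hca : ContinuousAt (fun x => sigRev f w x * deriv (fun u => f u i) x) s :=
    hcU.continuousAt (hUo.mem_nhds hsU)
  have := intervalIntegral.integral_hasDerivAt_right hint hmeas hca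
  simpa [sigRev] using this

noncomputable def sigT' {α : Type*} (f : ℝ → α → ℝ) (w : Word α) (t : ℝ) : ℝ :=
  sigRev f w.reverse t

lemma sigT'_nil (t : ℝ) : sigT' f ([] : Word α) t = 1 := rfl

lemma sigT'_concat (w : Word α) (i : α) (t : ℝ) :
    sigT' f (w ++ [i]) t = ∫ s in (0:ℝ)..t, sigT' f w s * deriv (fun u => f u i) s := by
  simp [sigT', List.reverse_append, sigRev]

lemma sigT'_zero (w : Word α) (hw : w ≠ []) : sigT' f w 0 = 0 := by
  obtain ⟨i, r, hr⟩ := List.exists_cons_of_ne_nil (show w.reverse ≠ [] by simpa using hw)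
  rw [sigT', hr, sigRev, intervalIntegral.integral_same]

lemma sigT'_contOn (hN : Nice T f S) (hT : 0 ≤ T) (w : Word α) :
    ContinuousOn (fun t => sigT' f w t) (Set.Icc 0 T) :=
  sigRev_contOn hN hT w.reverse

lemma sigT'_hasDeriv (hN : Nice T f S) (hT : 0 ≤ T) (w : Word α) (i : α)
    {s : ℝ} (hs : s ∈ Set.Ioo 0 T) (hsS : s ∉ S) :
    HasDerivAt (fun t => sigT' f (w ++ [i]) t)
      (sigT' f w s * deriv (fun u => f u i) s) s := by
  have := sigRev_hasDeriv hN hT w.reverse i hs hsS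
  simpa [sigT', List.reverse_append] using this

lemma contOn_listsum (hN : Nice T f S) (hT : 0 ≤ T) (l : List (Word α)) :
    ContinuousOn (fun s => (l.map (fun w => sigT' f w s)).sum) (Set.Icc 0 T) := by
  induction l with
  | nil => simpa using continuousOn_const
  | cons w l ih =>
      simp only [List.map_cons, List.sum_cons]
      exact (sigT'_contOn hN hT w).add ih

lemma listsum_integral (hN : Nice T f S) (hT : 0 ≤ T) (l : List (Word α)) (i : α)
    {t : ℝ} (ht : t ∈ Set.Icc 0 T) :
    ∫ s in (0:ℝ)..t, (l.map (fun w => sigT' f w s)).sum * deriv (fun u => f u i) s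
      = (l.map (fun w => sigT' f (w ++ [i]) t)).sum := by
  induction l with
  | nil => simp
  | cons w l ih =>
      have husub : Set.uIcc (0:ℝ) t ⊆ Set.uIcc 0 T :=
        Set.uIcc_subset_uIcc Set.left_mem_uIcc (by rw [Set.uIcc_of_le hT]; exact ht)
      have h1 : IntervalIntegrable (fun s => sigT' f w s * deriv (fun u => f u i) s)
          volume 0 t := (hN.intg i _ (sigT'_contOn hN hT w)).mono_set husub
      have h2 : IntervalIntegrable
          (fun s => (l.map (fun w => sigT' f w s)).sum * deriv (fun u => f u i) s)
          volume 0 t := (hN.intg i _ (contOn_listsum hN hT l)).mono_set husub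
      simp only [List.map_cons, List.sum_cons, add_mul]
      rw [intervalIntegral.integral_add h1 h2, ih, sigT'_concat]
lemma shuffles_concat_perm {α : Type*} (a b : α) (u v : Word α) :
    (shuffles (u ++ [a]) (v ++ [b])).Perm
      (((shuffles u (v ++ [b])).map (· ++ [a])) ++ ((shuffles (u ++ [a]) v).map (· ++ [b]))) := by
  rw [← Multiset.coe_eq_coe]
  have := shuffles_concat a b u v
  simpa [← Multiset.map_coe, ← Multiset.coe_add] using this

lemma sum_map_shuffles_concat {α β : Type*} [AddCommMonoid β] (a b : α) (u v : Word α)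
    (g : Word α → β) :
    ((shuffles (u ++ [a]) (v ++ [b])).map g).sum
      = ((shuffles u (v ++ [b])).map (fun w => g (w ++ [a]))).sum
        + ((shuffles (u ++ [a]) v).map (fun w => g (w ++ [b]))).sum := by
  rw [((shuffles_concat_perm a b u v).map g).sum_eq]
  simp [Function.comp_def]

lemma sh_identity_aux (hN : Nice T f S) (hT : 0 ≤ T) :
    ∀ (N : ℕ) (u v : Word α), u.length + v.length ≤ N → ∀ (t : ℝ), t ∈ Set.Icc 0 T →
    ((shuffles u v).map (fun w => sigT' f w t)).sum = sigT' f u t * sigT' f v t := by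
  intro N
  induction N with
  | zero =>
      intro u v hlen t ht
      have hu : u = [] := List.eq_nil_of_length_eq_zero (by omega)
      subst hu
      simp [shuffles, sigT'_nil]
  | succ N ih =>
    intro u v hlen t ht
    rcases List.eq_nil_or_concat u with rfl | ⟨p, a, rfl⟩
    · simp [shuffles, sigT'_nil]
    simp only [List.concat_eq_append]
    rcases List.eq_nil_or_concat v with rfl | ⟨q, b, rfl⟩
    · rw [shuffles_nil_right]; simp [sigT'_nil]
    · simp only [List.concat_eq_append]
      have hsubT : Set.Icc 0 t ⊆ Set.Icc 0 T := Set.Icc_subset_Icc le_rfl ht.2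
      have husub : Set.uIcc (0:ℝ) t ⊆ Set.uIcc 0 T := by
        rw [Set.uIcc_of_le hT, Set.uIcc_of_le ht.1]; exact hsubT
      have husub' : Set.uIcc (0:ℝ) t ⊆ Set.Icc 0 T := by
        rw [Set.uIcc_of_le ht.1]; exact hsubT
      rw [sum_map_shuffles_concat a b p q (fun w => sigT' f w t)]
      rw [show ((shuffles p (q ++ [b])).map fun w => sigT' f (w ++ [a]) t).sum
          = ∫ s in (0:ℝ)..t, ((shuffles p (q ++ [b])).map (fun w => sigT' f w s)).sum
              * deriv (fun u => f u a) s from (listsum_integral hN hT _ a ht).symm]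
      rw [show ((shuffles (p ++ [a]) q).map fun w => sigT' f (w ++ [b]) t).sum
          = ∫ s in (0:ℝ)..t, ((shuffles (p ++ [a]) q).map (fun w => sigT' f w s)).sum
              * deriv (fun u => f u b) s from (listsum_integral hN hT _ b ht).symm]
      have hint1 : IntervalIntegrable
          (fun s => sigT' f p s * sigT' f (q ++ [b]) s * deriv (fun u => f u a) s)
          volume 0 t :=
        (hN.intg a _ ((sigT'_contOn hN hT p).mul (sigT'_contOn hN hT (q ++ [b])))).mono_set husub
      have hint2 : IntervalIntegrable
          (fun s => sigT' f (p ++ [a]) s * sigT' f q s * deriv (fun u => f u b) s)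
          volume 0 t :=
        (hN.intg b _ ((sigT'_contOn hN hT (p ++ [a])).mul (sigT'_contOn hN hT q))).mono_set husub
      have hcont : ContinuousOn (fun y => sigT' f (p ++ [a]) y * sigT' f (q ++ [b]) y)
          (Set.Icc 0 t) :=
        ((sigT'_contOn hN hT (p ++ [a])).mul (sigT'_contOn hN hT (q ++ [b]))).mono hsubT
      have hftc := ftc_finset S 0 t ht.1
        (fun y => sigT' f (p ++ [a]) y * sigT' f (q ++ [b]) y)
        (fun s => sigT' f p s * sigT' f (q ++ [b]) s * deriv (fun u => f u a) s
          + sigT' f (p ++ [a]) s * sigT' f q s * deriv (fun u => f u b) s)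
        hcont
        (fun s hs hsS => by
          have hs' : s ∈ Set.Ioo 0 T := ⟨hs.1, lt_of_lt_of_le hs.2 ht.2⟩
          have h' := (sigT'_hasDeriv hN hT p a hs' hsS).mul (sigT'_hasDeriv hN hT q b hs' hsS)
          exact h'.congr_deriv (by ring))
        (hint1.add hint2)
      have e1 : Set.EqOn
          (fun s => ((shuffles p (q ++ [b])).map (fun w => sigT' f w s)).sum
            * deriv (fun u => f u a) s)
          (fun s => sigT' f p s * sigT' f (q ++ [b]) s * deriv (fun u => f u a) s)
          (Set.uIcc 0 t) := by
        intro s hs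
        simp only
        rw [ih p (q ++ [b]) (by simp only [List.length_append, List.length_cons, List.length_nil, List.length_concat] at hlen ⊢; omega) s (husub' hs)]
      have e2 : Set.EqOn
          (fun s => ((shuffles (p ++ [a]) q).map (fun w => sigT' f w s)).sum
            * deriv (fun u => f u b) s)
          (fun s => sigT' f (p ++ [a]) s * sigT' f q s * deriv (fun u => f u b) s)
          (Set.uIcc 0 t) := by
        intro s hs
        simp only
        rw [ih (p ++ [a]) q (by simp only [List.length_append, List.length_cons, List.length_nil, List.length_concat] at hlen ⊢; omega) s (husub' hs)]
      rw [intervalIntegral.integral_congr e1, intervalIntegral.integral_congr e2,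
        ← intervalIntegral.integral_add hint1 hint2, hftc]
      beta_reduce
      rw [sigT'_zero (p ++ [a]) (by simp), zero_mul, sub_zero]
lemma sh_identity (hN : Nice T f S) (hT : 0 ≤ T) (u v : Word α) {t : ℝ}
    (ht : t ∈ Set.Icc 0 T) :
    ((shuffles u v).map (fun w => sigT' f w t)).sum = sigT' f u t * sigT' f v t :=
  sh_identity_aux hN hT (u.length + v.length) u v le_rfl t ht

/-! ### Pairing with the signature -/

/-- The linear functional `x ↦ ⟨σ(X)ₜ, x⟩`. -/
noncomputable def phi {α : Type*} (f : ℝ → α → ℝ) (t : ℝ) : TA α →ₗ[ℝ] ℝ :=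
  Finsupp.linearCombination ℝ (fun w => sigT' f w t)

lemma phi_contOn (hN : Nice T f S) (hT : 0 ≤ T) (x : TA α) :
    ContinuousOn (fun t => phi f t x) (Set.Icc 0 T) := by
  simp only [phi, Finsupp.linearCombination_apply, Finsupp.sum, smul_eq_mul]
  exact continuousOn_finset_sum _ fun w _ =>
    continuousOn_const.mul (sigT'_contOn hN hT w)

lemma phi_zero_eq (f : ℝ → α → ℝ) (x : TA α) : phi f 0 x = x [] := by
  classical
  rw [phi, Finsupp.linearCombination_apply]
  have h1 : (Finsupp.sum x fun w c => c • sigT' f w 0)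
      = Finsupp.sum x fun w c => (if w = [] then c else 0) := by
    apply Finsupp.sum_congr
    intro w _
    by_cases hw : w = []
    · subst hw; simp [sigT'_nil]
    · simp [hw, sigT'_zero w hw]
  rw [h1, Finsupp.sum_ite_eq' x [] fun _ c => c]
  split
  · rfl
  · exact (Finsupp.notMem_support_iff.1 (by assumption)).symm

lemma rshw_concat_eq {α : Type*} (u q : Word α) (b : α) :
    rshw u (q ++ [b]) = ((shuffles u q).map fun w => Finsupp.single (w ++ [b]) (1 : ℝ)).sum := by
  have h1 : (q ++ [b]).dropLast = q := by simp
  have h2 : (q ++ [b]).drop ((q ++ [b]).length - 1) = [b] := by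
    simp
  rw [rshw, h1, h2]

lemma phi_rshw (hN : Nice T f S) (hT : 0 ≤ T) (u q : Word α) (b : α) :
    phi f T (rshw u (q ++ [b]))
      = ∫ s in (0:ℝ)..T, sigT' f u s * sigT' f q s * deriv (fun r => f r b) s := by
  rw [rshw_concat_eq, map_list_sum]
  simp only [List.map_map, Function.comp_def, phi, Finsupp.linearCombination_single, one_smul]
  rw [← listsum_integral hN hT _ b (Set.right_mem_Icc.2 hT)]
  apply intervalIntegral.integral_congr
  intro s hs
  rw [Set.uIcc_of_le hT] at hs
  simp only
  rw [sh_identity hN hT u q hs]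

lemma rshw_add_rshw {α : Type*} {u v : Word α} (hu : u ≠ []) (hv : v ≠ []) :
    rshw u v + rshw v u = shw u v := by
  obtain ⟨p, a, rfl⟩ := List.eq_nil_or_concat u |>.resolve_left hu
  obtain ⟨q, b, rfl⟩ := List.eq_nil_or_concat v |>.resolve_left hv
  simp only [List.concat_eq_append]
  rw [rshw_concat_eq, rshw_concat_eq, shw]
  rw [((shuffles_concat_perm a b p q).map (fun w => Finsupp.single w (1:ℝ))).sum_eq]
  rw [List.map_append, List.sum_append, List.map_map, List.map_map]
  rw [((shuffles_comm (q ++ [b]) p).map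
    (fun w => Finsupp.single (w ++ [a]) (1:ℝ))).sum_eq]
  simp only [Function.comp_def]
  rw [add_comm]

lemma phi_shw (hN : Nice T f S) (hT : 0 ≤ T) (u v : Word α) :
    phi f T (shw u v) = sigT' f u T * sigT' f v T := by
  rw [shw, map_list_sum]
  simp only [List.map_map, Function.comp_def, phi, Finsupp.linearCombination_single, one_smul]
  exact sh_identity hN hT u v (Set.right_mem_Icc.2 hT)

lemma key (hN : Nice T f S) (hT : 0 ≤ T) (x : TA α)
    (hvan : ∀ s ∈ Set.Icc 0 T, phi f s x = 0) (q : Word α) (b : α) :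
    (x.sum fun u cu =>
      cu * ∫ s in (0:ℝ)..T, sigT' f u s * sigT' f q s * deriv (fun r => f r b) s) = 0 := by
  classical
  rw [Finsupp.sum]
  have hint : ∀ u : Word α, IntervalIntegrable
      (fun s => x u * (sigT' f u s * sigT' f q s * deriv (fun r => f r b) s)) volume 0 T :=
    fun u => (hN.intg b _ ((sigT'_contOn hN hT u).mul (sigT'_contOn hN hT q))).const_mul (x u)
  have step1 : ∀ u ∈ x.support,
      x u * ∫ s in (0:ℝ)..T, sigT' f u s * sigT' f q s * deriv (fun r => f r b) s
        = ∫ s in (0:ℝ)..T, x u * (sigT' f u s * sigT' f q s * deriv (fun r => f r b) s) :=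
    fun u _ => (intervalIntegral.integral_const_mul _ _).symm
  rw [Finset.sum_congr rfl step1, ← intervalIntegral.integral_finset_sum fun u _ => hint u]
  rw [intervalIntegral.integral_congr (g := fun _ => (0:ℝ)) ?_]
  · simp
  · intro s hs
    rw [Set.uIcc_of_le hT] at hs
    simp only
    have e1 : ∀ u ∈ x.support,
        x u * (sigT' f u s * sigT' f q s * deriv (fun r => f r b) s)
          = (x u * sigT' f u s) * (sigT' f q s * deriv (fun r => f r b) s) := by
      intro u _; ring
    rw [Finset.sum_congr rfl e1, ← Finset.sum_mul]
    have e2 : ∑ u ∈ x.support, x u * sigT' f u s = phi f s x := by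
      simp [phi, Finsupp.linearCombination_apply, Finsupp.sum, smul_eq_mul]
    rw [e2, hvan s hs, zero_mul]


lemma mem_Idl_iff {α : Type*} {M : Set (RawPath α)} {x : TA α} :
    x ∈ Idl M ↔ ∀ X ∈ M, Finsupp.linearCombination ℝ (sig X) x = 0 := by
  simp [Idl, Submodule.mem_iInf, LinearMap.mem_ker]

lemma idl_vanish {α : Type*} {M : Set (RawPath α)} (hne : M.Nonempty)
    (hpath : ∀ X ∈ M, IsPath X)
    (hsub : ∀ X ∈ M, ∀ t : ℝ, 0 < t → t ≤ X.T → (⟨t, X.toFun⟩ : RawPath α) ∈ M)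
    {x : TA α} (hx : x ∈ Idl M) :
    x [] = 0 ∧ ∀ X ∈ M, ∀ t ∈ Set.Icc 0 X.T, phi X.toFun t x = 0 := by
  have hmem := mem_Idl_iff.1 hx
  have hIoc : ∀ X ∈ M, ∀ t ∈ Set.Ioc 0 X.T, phi X.toFun t x = 0 := by
    intro X hX t ht
    have hY : (⟨t, X.toFun⟩ : RawPath α) ∈ M := hsub X hX t ht.1 ht.2
    exact hmem _ hY
  obtain ⟨X₀, hX₀⟩ := hne
  obtain ⟨S, hN⟩ := exists_nice X₀ (hpath X₀ hX₀)
  have hT0 : 0 < X₀.T := (hpath X₀ hX₀).1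
  have hc := phi_contOn hN hT0.le x
  have h0 : phi X₀.toFun 0 x = 0 := by
    have h1 : Filter.Tendsto (fun t => phi X₀.toFun t x)
        (nhdsWithin 0 (Set.Ioc 0 X₀.T)) (nhds (phi X₀.toFun 0 x)) :=
      (hc.continuousWithinAt (Set.left_mem_Icc.2 hT0.le)).mono Set.Ioc_subset_Icc_self
    have h2 : Filter.Tendsto (fun t => phi X₀.toFun t x)
        (nhdsWithin 0 (Set.Ioc 0 X₀.T)) (nhds 0) := by
      refine Filter.Tendsto.congr' ?_ tendsto_const_nhds
      filter_upwards [self_mem_nhdsWithin] with t ht2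
      exact (hIoc X₀ hX₀ t ht2).symm
    haveI : (nhdsWithin (0:ℝ) (Set.Ioc 0 X₀.T)).NeBot := by
      apply mem_closure_iff_nhdsWithin_neBot.1
      rw [closure_Ioc hT0.ne]
      exact Set.left_mem_Icc.2 hT0.le
    exact tendsto_nhds_unique h1 h2
  have hempty : x [] = 0 := by rw [← phi_zero_eq X₀.toFun x]; exact h0
  refine ⟨hempty, ?_⟩
  intro X hX t ht
  rcases eq_or_lt_of_le ht.1 with h | h
  · rw [← h, phi_zero_eq]; exact hempty
  · exact hIoc X hX t ⟨h, ht.2⟩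



/-- If a nonempty set `M` of paths contains all left subpaths of its
members, then `ℐ(M) ⊆ T^{≥1}(ℝ^d)` and `ℐ(M)` is a `≻`-ideal. -/
theorem statement7 {d : ℕ} (M : Set (RawPath (Fin d))) (hne : M.Nonempty)
    (hpath : ∀ X ∈ M, IsPath X)
    (hsub : ∀ X ∈ M, ∀ t : ℝ, 0 < t → t ≤ X.T →
      (⟨t, X.toFun⟩ : RawPath (Fin d)) ∈ M) :
    (∀ x ∈ Idl M, x [] = 0) ∧
    (∀ x ∈ Idl M, ∀ y : TA (Fin d), y [] = 0 →
      rsh x y ∈ Idl M ∧ rsh y x ∈ Idl M) := by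
  classical
  constructor
  · intro x hx
    exact (idl_vanish hne hpath hsub hx).1
  · intro x hx y hy
    obtain ⟨hx0, hvan⟩ := idl_vanish hne hpath hsub hx
    -- the basic computation of `L X (rsh x' y')` as a double sum
    have expand : ∀ (X : RawPath (Fin d)) (x' y' : TA (Fin d)),
        Finsupp.linearCombination ℝ (sig X) (rsh x' y')
          = x'.sum fun u cu => y'.sum fun v cv =>
              (cu * cv) * phi X.toFun X.T (rshw u v) := by
      intro X x' y'
      simp only [rsh, map_finsuppSum, _root_.map_smul, smul_eq_mul]
      rfl
    -- the key vanishing of ∑_u cu ⬝ ⟨σ(X), rshw u v⟩ for v ≠ []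
    have inner_zero : ∀ X ∈ M, ∀ v : Word (Fin d), v ≠ [] →
        (x.sum fun u cu => cu * phi X.toFun X.T (rshw u v)) = 0 := by
      intro X hX v hv
      obtain ⟨S, hN⟩ := exists_nice X (hpath X hX)
      have hT : (0:ℝ) ≤ X.T := (hpath X hX).1.le
      obtain ⟨q, b, rfl⟩ := List.eq_nil_or_concat v |>.resolve_left hv
      simp only [List.concat_eq_append]
      have e : ∀ u ∈ x.support, x u * phi X.toFun X.T (rshw u (q ++ [b]))
          = x u * ∫ s in (0:ℝ)..X.T,
              sigT' X.toFun u s * sigT' X.toFun q s * deriv (fun r => X.toFun r b) s := by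
        intro u _
        rw [phi_rshw hN hT]
      have := key hN hT x (hvan X hX) q b
      simp only [Finsupp.sum] at this ⊢
      rw [Finset.sum_congr rfl e, this]
    have phiTx : ∀ X ∈ M, phi X.toFun X.T x = 0 := fun X hX =>
      hvan X hX X.T (Set.right_mem_Icc.2 (hpath X hX).1.le)
    constructor
    · rw [mem_Idl_iff]
      intro X hX
      rw [expand X x y]
      simp only [Finsupp.sum]
      rw [Finset.sum_comm]
      apply Finset.sum_eq_zero
      intro v hv
      have hvne : v ≠ [] := fun h => (Finsupp.mem_support_iff.1 hv) (h ▸ hy)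
      have e : ∀ u ∈ x.support, (x u * y v) * phi X.toFun X.T (rshw u v)
          = y v * (x u * phi X.toFun X.T (rshw u v)) := fun u _ => by ring
      rw [Finset.sum_congr rfl e, ← Finset.mul_sum]
      have hz := inner_zero X hX v hvne
      simp only [Finsupp.sum] at hz
      rw [hz, mul_zero]
    · rw [mem_Idl_iff]
      intro X hX
      obtain ⟨S, hN⟩ := exists_nice X (hpath X hX)
      have hT : (0:ℝ) ≤ X.T := (hpath X hX).1.le
      rw [expand X y x]
      simp only [Finsupp.sum]
      apply Finset.sum_eq_zero
      intro v hv
      have hvne : v ≠ [] := fun h => (Finsupp.mem_support_iff.1 hv) (h ▸ hy)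
      have e : ∀ u ∈ x.support, (y v * x u) * phi X.toFun X.T (rshw v u)
          = y v * ((x u * phi X.toFun X.T (shw u v))
              - (x u * phi X.toFun X.T (rshw u v))) := by
        intro u hu
        have hune : u ≠ [] := fun h => (Finsupp.mem_support_iff.1 hu) (h ▸ hx0)
        have hid : rshw v u = shw u v - rshw u v :=
          eq_sub_of_add_eq' (rshw_add_rshw hune hvne)
        rw [hid, map_sub]
        ring
      rw [Finset.sum_congr rfl e, ← Finset.mul_sum, Finset.sum_sub_distrib]
      have hz := inner_zero X hX v hvne
      simp only [Finsupp.sum] at hz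
      have hshw : ∑ u ∈ x.support, x u * phi X.toFun X.T (shw u v) = 0 := by
        have e2 : ∀ u ∈ x.support, x u * phi X.toFun X.T (shw u v)
            = (x u * sigT' X.toFun u X.T) * sigT' X.toFun v X.T := by
          intro u _
          rw [phi_shw hN hT]
          ring
        rw [Finset.sum_congr rfl e2, ← Finset.sum_mul]
        have e3 : ∑ u ∈ x.support, x u * sigT' X.toFun u X.T = phi X.toFun X.T x := by
          simp [phi, Finsupp.linearCombination_apply, Finsupp.sum, smul_eq_mul]
        rw [e3, phiTx X hX, zero_mul]
      rw [hshw, hz, sub_zero, mul_zero]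

end PathVarieties
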